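/- Let n ≥ 1 and let G be a subgroup of GL(n,ℝ). Suppose B₁ and B₂ are two linearly independent nondegenerate symmetric bilinear forms on ℝⁿ that are both preserved by every element of G (i.e. Bᵢ(g·v, g·w) = Bᵢ(v,w) for all g ∈ G and v,w ∈ ℝⁿ, i = 1,2), and suppose B₁ has signature (p,q) with p ≠ q. Then G acts reducibly on ℝⁿ, i.e. there exists a G-invariant linear subspace W of ℝⁿ with W ≠ 0 and W ≠ ℝⁿ. -/

import Mathlib

open Matrix Polynomial

lemma aux_diag {n p : ℕ} (B : LinearMap.BilinForm ℝ (Fin n → ℝ))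
    (e : Module.Basis (Fin n) ℝ (Fin n → ℝ))
    (hsig : ∀ i j, B (e i) (e j) = if i = j then (if (i : ℕ) < p then 1 else -1) else 0)
    (v : Fin n → ℝ) :
    B v v = ∑ i : Fin n, (if (i : ℕ) < p then (1:ℝ) else -1) * (e.repr v i) ^ 2 := by
  have h : B v v = B (∑ i : Fin n, e.repr v i • e i) (∑ j : Fin n, e.repr v j • e j) := by
    rw [e.sum_repr]
  rw [h]
  simp only [map_sum, _root_.map_smul, LinearMap.sum_apply, LinearMap.smul_apply, smul_eq_mul,
    hsig, mul_ite, mul_zero, Finset.mul_sum]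
  rw [Finset.sum_comm]
  refine Finset.sum_congr rfl fun i _ => ?_
  rw [Finset.sum_ite_eq (Finset.univ : Finset (Fin n)) i]
  simp only [Finset.mem_univ, if_true]
  split <;> ring

lemma aux_span_val {n p : ℕ} (B : LinearMap.BilinForm ℝ (Fin n → ℝ))
    (e : Module.Basis (Fin n) ℝ (Fin n → ℝ))
    (hsig : ∀ i j, B (e i) (e j) = if i = j then (if (i : ℕ) < p then 1 else -1) else 0)
    (s : Set (Fin n)) (ε : ℝ)
    (hε : ∀ i ∈ s, (if (i : ℕ) < p then (1:ℝ) else -1) = ε)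
    (v : Fin n → ℝ) (hv : v ∈ Submodule.span ℝ (e '' s)) (hv0 : v ≠ 0) :
    ∃ c : ℝ, 0 < c ∧ B v v = ε * c := by
  rw [Module.Basis.mem_span_image] at hv
  refine ⟨∑ i : Fin n, (e.repr v i) ^ 2, ?_, ?_⟩
  · have h0 : e.repr v ≠ 0 := fun h => hv0 (by
      have := congrArg e.repr.symm h
      simpa using this)
    obtain ⟨i, hi⟩ := Finsupp.ne_iff.1 h0
    simp only [Finsupp.coe_zero, Pi.zero_apply] at hi
    have hpos : (0:ℝ) < (e.repr v i) ^ 2 := by positivity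
    calc (0:ℝ) < (e.repr v i)^2 := hpos
      _ ≤ ∑ i : Fin n, (e.repr v i) ^ 2 :=
        Finset.single_le_sum (fun j _ => sq_nonneg (e.repr v j)) (Finset.mem_univ i)
  · rw [aux_diag B e hsig v, Finset.mul_sum]
    refine Finset.sum_congr rfl fun i _ => ?_
    by_cases hi : i ∈ s
    · rw [hε i hi]
    · have hz : e.repr v i = 0 := by
        by_contra h
        exact hi (hv (Finsupp.mem_support_iff.2 h))
      rw [hz]
      ring

lemma aux_count {n : ℕ} (B : LinearMap.BilinForm ℝ (Fin n → ℝ))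
    (P N : Submodule ℝ (Fin n → ℝ))
    (hP : ∀ v ∈ P, v ≠ 0 → 0 < B v v)
    (hN : ∀ v ∈ N, v ≠ 0 → B v v < 0) :
    Module.finrank ℝ P + Module.finrank ℝ N ≤ n := by
  have hdisj : P ⊓ N = ⊥ := by
    rw [Submodule.eq_bot_iff]
    intro v ⟨hv1, hv2⟩
    by_contra h
    exact absurd (hP v hv1 h) (not_lt.2 (le_of_lt (hN v hv2 h)))
  have := Submodule.finrank_sup_add_finrank_inf_eq P N
  rw [hdisj, finrank_bot, add_zero] at this
  rw [← this]
  calc Module.finrank ℝ ↥(P ⊔ N) ≤ Module.finrank ℝ (Fin n → ℝ) := Submodule.finrank_le _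
    _ = n := by simp

lemma aux_rank {n k : ℕ} (e : Module.Basis (Fin n) ℝ (Fin n → ℝ)) (f : Fin k → Fin n)
    (hf : Function.Injective f) :
    Module.finrank ℝ (Submodule.span ℝ (e '' Set.range f)) = k := by
  rw [← Set.range_comp]
  rw [finrank_span_eq_card (e.linearIndependent.comp f hf)]
  simp

set_option maxHeartbeats 1000000 in
/-- **Theorem 2.1 (i).** If a subgroup `G` of `GL(n, ℝ)` preserves two linearly
independent nondegenerate symmetric bilinear forms on `ℝⁿ`, one of which has
signature `(p, q)` with `p ≠ q`, then `G` acts reducibly on `ℝⁿ`. -/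
theorem reducible_of_two_forms_signature_ne
    (n : ℕ) (hn : 1 ≤ n) (G : Subgroup (GL (Fin n) ℝ))
    (B₁ B₂ : LinearMap.BilinForm ℝ (Fin n → ℝ))
    (hsymm₁ : ∀ v w, B₁ v w = B₁ w v)
    (hsymm₂ : ∀ v w, B₂ v w = B₂ w v)
    (hnd₁ : ∀ v, (∀ w, B₁ v w = 0) → v = 0)
    (hnd₂ : ∀ v, (∀ w, B₂ v w = 0) → v = 0)
    (hind : LinearIndependent ℝ ![B₁, B₂])
    (hinv₁ : ∀ g ∈ G, ∀ v w : Fin n → ℝ,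
      B₁ ((g : Matrix (Fin n) (Fin n) ℝ).mulVec v)
         ((g : Matrix (Fin n) (Fin n) ℝ).mulVec w) = B₁ v w)
    (hinv₂ : ∀ g ∈ G, ∀ v w : Fin n → ℝ,
      B₂ ((g : Matrix (Fin n) (Fin n) ℝ).mulVec v)
         ((g : Matrix (Fin n) (Fin n) ℝ).mulVec w) = B₂ v w)
    (p q : ℕ) (hpq : p + q = n) (hne : p ≠ q)
    (hsig : ∃ e : Module.Basis (Fin n) ℝ (Fin n → ℝ), ∀ i j,
      B₁ (e i) (e j) = if i = j then (if (i : ℕ) < p then 1 else -1) else 0) :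
    ∃ W : Submodule ℝ (Fin n → ℝ), W ≠ ⊥ ∧ W ≠ ⊤ ∧
      ∀ g ∈ G, ∀ v ∈ W, (g : Matrix (Fin n) (Fin n) ℝ).mulVec v ∈ W := by
  classical
  obtain ⟨e, he⟩ := hsig
  haveI : Nonempty (Fin n) := ⟨⟨0, hn⟩⟩
  have hB1nd : B₁.Nondegenerate :=
    ⟨hnd₁, fun y h => hnd₁ y fun w => by rw [hsymm₁]; exact h w⟩
  -- separation by B₁
  have sep : ∀ x y : Fin n → ℝ, (∀ w, B₁ x w = B₁ y w) → x = y := by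
    intro x y h
    have h0 : ∀ w, B₁ (x - y) w = 0 := by
      intro w
      rw [map_sub, LinearMap.sub_apply, h w, sub_self]
    have := hnd₁ _ h0
    rwa [sub_eq_zero] at this
  -- the intertwining operator
  set T : (Fin n → ℝ) →ₗ[ℝ] (Fin n → ℝ) :=
    (B₁.toDual hB1nd).symm.toLinearMap ∘ₗ B₂ with hTdef
  have hT : ∀ v w, B₁ (T v) w = B₂ v w := by
    intro v w
    exact LinearMap.BilinForm.apply_toDual_symm_apply (B := B₁) (hB := hB1nd) (B₂ v) w
  have hTsa : ∀ v w, B₁ (T v) w = B₁ v (T w) := by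
    intro v w
    rw [hT, hsymm₂ v w, ← hT, hsymm₁]
  have hcan : ∀ g : GL (Fin n) ℝ, ∀ w : Fin n → ℝ,
      (g : Matrix (Fin n) (Fin n) ℝ).mulVec ((↑g⁻¹ : Matrix (Fin n) (Fin n) ℝ).mulVec w) = w := by
    intro g w
    rw [Matrix.mulVec_mulVec, ← Units.val_mul, mul_inv_cancel, Units.val_one, Matrix.one_mulVec]
  -- T commutes with the G-action
  have hGT : ∀ g ∈ G, ∀ v, T ((g : Matrix (Fin n) (Fin n) ℝ).mulVec v)
      = (g : Matrix (Fin n) (Fin n) ℝ).mulVec (T v) := by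
    intro g hg v
    apply sep
    intro w
    have h1 : B₁ (T ((g : Matrix (Fin n) (Fin n) ℝ).mulVec v)) w
        = B₂ ((g : Matrix (Fin n) (Fin n) ℝ).mulVec v) w := hT _ _
    have h2 : B₂ ((g : Matrix (Fin n) (Fin n) ℝ).mulVec v) w
        = B₂ v ((↑g⁻¹ : Matrix (Fin n) (Fin n) ℝ).mulVec w) := by
      conv_lhs => rw [← hcan g w]
      exact hinv₂ g hg v _
    have h3 : B₁ (T v) ((↑g⁻¹ : Matrix (Fin n) (Fin n) ℝ).mulVec w)
        = B₁ ((g : Matrix (Fin n) (Fin n) ℝ).mulVec (T v)) w := by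
      conv_rhs => rw [← hcan g w]
      exact (hinv₁ g hg (T v) _).symm
    rw [h1, h2, ← hT, h3]
  -- minimal polynomial, monic irreducible factor
  have hTint : IsIntegral ℝ T := LinearMap.isIntegral T
  have hm0 : minpoly ℝ T ≠ 0 := minpoly.ne_zero hTint
  have hmdeg : 0 < (minpoly ℝ T).natDegree := minpoly.natDegree_pos hTint
  have hmnu : ¬ IsUnit (minpoly ℝ T) := Polynomial.not_isUnit_of_natDegree_pos _ hmdeg
  obtain ⟨f₀, hf₀irr, hf₀dvd⟩ := WfDvdMonoid.exists_irreducible_factor hmnu hm0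
  set f := normalize f₀ with hfdef
  have hfirr : Irreducible f := (associated_normalize f₀).irreducible hf₀irr
  have hfdvd : f ∣ minpoly ℝ T := (normalize_dvd_iff).2 hf₀dvd
  have hfmonic : f.Monic := Polynomial.monic_normalize hf₀irr.ne_zero
  have hfdeg2 : f.natDegree ≤ 2 := hfirr.natDegree_le_two
  have hfdeg1 : 0 < f.natDegree := hfirr.natDegree_pos
  -- the candidate invariant subspace
  set W : Submodule ℝ (Fin n → ℝ) := LinearMap.ker (Polynomial.aeval T f) with hWdef
  -- W ≠ ⊥
  have hWbot : W ≠ ⊥ := by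
    obtain ⟨g, hg⟩ := hfdvd
    have hgne : g ≠ 0 := fun h => hm0 (by rw [hg, h, mul_zero])
    have haeg : Polynomial.aeval T g ≠ 0 := by
      intro h
      have hle := minpoly.degree_le_of_ne_zero ℝ T hgne h
      have hlt : g.natDegree < (minpoly ℝ T).natDegree := by
        have := Polynomial.natDegree_mul hfirr.ne_zero hgne
        rw [← hg] at this
        omega
      exact absurd (Polynomial.natDegree_le_natDegree hle) (not_le.2 hlt)
    obtain ⟨x, hx⟩ : ∃ x, Polynomial.aeval T g x ≠ 0 := by
      by_contra h
      push_neg at h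
      exact haeg (LinearMap.ext h)
    have hker : Polynomial.aeval T g x ∈ W := by
      rw [hWdef, LinearMap.mem_ker, ← Module.End.mul_apply, ← _root_.map_mul, ← hg,
        minpoly.aeval, LinearMap.zero_apply]
    exact Submodule.ne_bot_iff _ |>.2 ⟨_, hker, hx⟩
  -- invariance of W
  have hWinv : ∀ g ∈ G, ∀ v ∈ W, (g : Matrix (Fin n) (Fin n) ℝ).mulVec v ∈ W := by
    intro g hg v hv
    set L : (Fin n → ℝ) →ₗ[ℝ] (Fin n → ℝ) :=
      Matrix.mulVecLin (g : Matrix (Fin n) (Fin n) ℝ) with hLdef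
    have hLT : Commute L T := by
      refine LinearMap.ext fun u => ?_
      simp only [Module.End.mul_apply, hLdef, Matrix.mulVecLin_apply]
      exact (hGT g hg u).symm
    have hcommall : ∀ φ : Polynomial ℝ, Commute L (Polynomial.aeval T φ) := by
      intro φ
      induction φ using Polynomial.induction_on' with
      | add r s hr hs => rw [map_add]; exact hr.add_right hs
      | monomial k a =>
        rw [Polynomial.aeval_monomial]
        exact Commute.mul_right ((Algebra.commutes a L).symm) (hLT.pow_right k)
    have hcomm : Commute L (Polynomial.aeval T f) := hcommall f
    have : Polynomial.aeval T f ((g : Matrix (Fin n) (Fin n) ℝ).mulVec v) = 0 := by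
      have hLv : (g : Matrix (Fin n) (Fin n) ℝ).mulVec v = L v := by
        simp [hLdef, Matrix.mulVecLin_apply]
      rw [hLv, ← Module.End.mul_apply, ← hcomm, Module.End.mul_apply,
        LinearMap.mem_ker.1 hv, map_zero]
    exact LinearMap.mem_ker.2 this
  -- W ≠ ⊤
  have hWtop : W ≠ ⊤ := by
    intro htop
    have h0 : Polynomial.aeval T f = 0 := LinearMap.ker_eq_top.1 htop
    have hdegcases : f.natDegree = 1 ∨ f.natDegree = 2 := by omega
    rcases hdegcases with hdeg | hdeg
    · -- degree 1 : T is scalar, contradicting independence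
      have hf1 : f = X + C (f.coeff 0) := hfmonic.eq_X_add_C hdeg
      rw [hf1] at h0
      simp only [map_add, aeval_X, aeval_C] at h0
      have hTv : ∀ v, T v = (-(f.coeff 0)) • v := by
        intro v
        have hv := LinearMap.ext_iff.1 h0 v
        simp only [LinearMap.add_apply, LinearMap.zero_apply,
          Module.algebraMap_end_apply] at hv
        have : T v = -(f.coeff 0 • v) := by linear_combination (norm := module) hv
        simpa using this
      have hB : B₂ = (-(f.coeff 0)) • B₁ := by
        refine LinearMap.ext fun v => LinearMap.ext fun w => ?_
        rw [← hT, hTv]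
        simp [smul_eq_mul]
      have h := ((LinearIndependent.pair_iff (x := B₁) (y := B₂) (R := ℝ)).mp hind
        (f.coeff 0) 1 (by rw [hB]; module)).2
      norm_num at h
    · -- degree 2 : no real root, build an anti-isometry, get p = q
      set c : ℝ := f.coeff 1 with hcdef
      set d : ℝ := f.coeff 0 with hddef
      -- positivity of d - c²/4
      have hspos : 0 < d - c^2/4 := by
        have hroot : ∀ x : ℝ, f.eval x ≠ 0 := by
          intro x hx
          obtain ⟨b, hb⟩ := (dvd_iff_isRoot).2 hx
          rcases hfirr.isUnit_or_isUnit hb with h | h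
          · exact Polynomial.not_isUnit_X_sub_C x h
          · have hbne : b ≠ 0 := fun h' => by
              rw [h', mul_zero] at hb; exact hfirr.ne_zero hb
            have := Polynomial.natDegree_mul (Polynomial.X_sub_C_ne_zero x) hbne
            rw [← hb, hdeg, Polynomial.natDegree_X_sub_C,
              Polynomial.natDegree_eq_zero_of_isUnit h] at this
            omega
        have heval : ∀ x : ℝ, f.eval x = d + c * x + x^2 := by
          intro x
          rw [Polynomial.eval_eq_sum_range, hdeg]
          rw [Finset.sum_range_succ, Finset.sum_range_succ, Finset.sum_range_succ,
            Finset.sum_range_zero]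
          have h2 : f.coeff 2 = 1 := by
            have := hfmonic.coeff_natDegree
            rwa [hdeg] at this
          rw [h2, ← hcdef, ← hddef]
          ring
        by_contra h
        push_neg at h
        have hnn : 0 ≤ c^2/4 - d := by linarith
        have hs : Real.sqrt (c^2/4 - d) ^ 2 = c^2/4 - d := Real.sq_sqrt hnn
        apply hroot (-(c/2) + Real.sqrt (c^2/4 - d))
        rw [heval]
        nlinarith [hs]
      set s : ℝ := d - c^2/4 with hsdef
      set S : (Fin n → ℝ) →ₗ[ℝ] (Fin n → ℝ) :=
        T + (c / 2) • (1 : (Fin n → ℝ) →ₗ[ℝ] (Fin n → ℝ)) with hSdef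
      -- S ∘ S = -s • id
      have hSS : ∀ v, S (S v) = (-s) • v := by
        intro v
        have hae : Polynomial.aeval T f = ∑ i ∈ Finset.range 3, f.coeff i • T ^ i := by
          have := Polynomial.aeval_eq_sum_range (p := f) T
          rwa [hdeg] at this
        rw [h0] at hae
        have h2 : f.coeff 2 = 1 := by
          have := hfmonic.coeff_natDegree
          rwa [hdeg] at this
        rw [Finset.sum_range_succ, Finset.sum_range_succ, Finset.sum_range_succ,
          Finset.sum_range_zero, h2, one_smul, zero_add] at hae
        have hv := LinearMap.ext_iff.1 hae v
        simp only [LinearMap.zero_apply, LinearMap.add_apply, LinearMap.smul_apply, pow_zero,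
          pow_one, pow_two, Module.End.mul_apply, Module.End.one_apply, ← hcdef, ← hddef] at hv
        simp only [hSdef, LinearMap.add_apply, LinearMap.smul_apply, Module.End.one_apply,
          map_add, _root_.map_smul, hsdef]
        have hTT : T (T v) = -(d • v) - c • T v := by
          linear_combination (norm := module) -hv
        rw [hTT]
        match_scalars <;> ring
      -- S is self-adjoint and an anti-isometry up to the factor s
      have hSsa : ∀ v w, B₁ (S v) w = B₁ v (S w) := by
        intro v w
        simp only [hSdef, LinearMap.add_apply, LinearMap.smul_apply, Module.End.one_apply,
          map_add, _root_.map_smul, LinearMap.add_apply, LinearMap.smul_apply]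
        rw [hTsa]
      have hSneg : ∀ v, B₁ (S v) (S v) = (-s) * B₁ v v := by
        intro v
        rw [hSsa, hSS, _root_.map_smul, smul_eq_mul]
      -- S is invertible
      have hsne : s ≠ 0 := ne_of_gt hspos
      have hSinj : Function.Injective S := by
        intro a b hab
        have : (-s) • a = (-s) • b := by rw [← hSS, ← hSS, hab]
        have := smul_right_injective (Fin n → ℝ) (by simpa using hsne) this
        exact this
      -- the two spans
      have hple : p ≤ n := by omega
      set fpos : Fin p → Fin n := fun j => ⟨j.1, by omega⟩ with hfposdef
      set fneg : Fin q → Fin n := fun j => ⟨p + j.1, by omega⟩ with hfnegdef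
      have hfposinj : Function.Injective fpos := by
        intro a b hab
        simpa [hfposdef, Fin.ext_iff] using hab
      have hfneginj : Function.Injective fneg := by
        intro a b hab
        simpa [hfnegdef, Fin.ext_iff] using hab
      set Ppos : Submodule ℝ (Fin n → ℝ) := Submodule.span ℝ (e '' Set.range fpos) with hPposdef
      set Pneg : Submodule ℝ (Fin n → ℝ) := Submodule.span ℝ (e '' Set.range fneg) with hPnegdef
      have hrankpos : Module.finrank ℝ Ppos = p := aux_rank e fpos hfposinj
      have hrankneg : Module.finrank ℝ Pneg = q := aux_rank e fneg hfneginj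
      -- definiteness
      have hε1 : ∀ i ∈ Set.range fpos, (if (i : ℕ) < p then (1:ℝ) else -1) = 1 := by
        rintro i ⟨j, rfl⟩
        simp [hfposdef, j.2]
      have hε2 : ∀ i ∈ Set.range fneg, (if (i : ℕ) < p then (1:ℝ) else -1) = -1 := by
        rintro i ⟨j, rfl⟩
        simp [hfnegdef]
      have hPposdefn : ∀ v ∈ Ppos, v ≠ 0 → 0 < B₁ v v := by
        intro v hv hv0
        obtain ⟨cc, hcc, hval⟩ := aux_span_val B₁ e he (Set.range fpos) 1 hε1 v hv hv0
        rw [hval]; linarith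
      have hPnegdefn : ∀ v ∈ Pneg, v ≠ 0 → B₁ v v < 0 := by
        intro v hv hv0
        obtain ⟨cc, hcc, hval⟩ := aux_span_val B₁ e he (Set.range fneg) (-1) hε2 v hv hv0
        rw [hval]; linarith
      -- images under S
      have hmappos : ∀ w ∈ Ppos.map S, w ≠ 0 → B₁ w w < 0 := by
        intro w hw hw0
        obtain ⟨v, hv, rfl⟩ := Submodule.mem_map.1 hw
        have hv0 : v ≠ 0 := fun h => hw0 (by rw [h, map_zero])
        rw [hSneg]
        have := hPposdefn v hv hv0
        nlinarith
      have hmapneg : ∀ w ∈ Pneg.map S, w ≠ 0 → 0 < B₁ w w := by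
        intro w hw hw0
        obtain ⟨v, hv, rfl⟩ := Submodule.mem_map.1 hw
        have hv0 : v ≠ 0 := fun h => hw0 (by rw [h, map_zero])
        rw [hSneg]
        have := hPnegdefn v hv hv0
        nlinarith
      have hrankmappos : Module.finrank ℝ (Ppos.map S) = p := by
        rw [← (LinearEquiv.finrank_eq (Submodule.equivMapOfInjective S hSinj Ppos))]
        exact hrankpos
      have hrankmapneg : Module.finrank ℝ (Pneg.map S) = q := by
        rw [← (LinearEquiv.finrank_eq (Submodule.equivMapOfInjective S hSinj Pneg))]
        exact hrankneg
      have h1 := aux_count B₁ Ppos (Ppos.map S) hPposdefn hmappos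
      have h2 := aux_count B₁ (Pneg.map S) Pneg hmapneg hPnegdefn
      rw [hrankpos, hrankmappos] at h1
      rw [hrankneg, hrankmapneg] at h2
      omega
  exact ⟨W, hWbot, hWtop, hWinv⟩
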